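/- Assume that for every 2-dimensional poset P, if every subset of P of cardinality ℵ1 is the union of countably many antichains, then P is the union of countably many antichains. Then for every tree T, if every subset of T of cardinality ℵ1 is the union of countably many antichains, then T is the union of countably many antichains. -/

import Mathlib

open Cardinal

universe u

/-- A poset is 2-dimensional if its order relation is the intersection of two
linear orders on its underlying set. -/
def TwoDim (P : Type u) [PartialOrder P] : Prop :=
  ∃ le₁ le₂ : P → P → Prop, IsLinearOrder P le₁ ∧ IsLinearOrder P le₂ ∧
    ∀ x y : P, x ≤ y ↔ (le₁ x y ∧ le₂ x y)

/-- A partial order is a tree if it is well-founded and the set of strict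
predecessors of every element is a chain. -/
def IsTreeOrder (T : Type u) [PartialOrder T] : Prop :=
  WellFounded ((· < ·) : T → T → Prop) ∧ ∀ v : T, IsChain (· ≤ ·) {u : T | u < v}

/-- A subset `Q` of a poset is the union of countably many antichains
(with respect to the induced order). -/
def CtblAntichainCover {P : Type u} [PartialOrder P] (Q : Set P) : Prop :=
  ∃ f : Q → ℕ, ∀ x y : Q, f x = f y → x ≠ y → ¬((x : P) ≤ y) ∧ ¬((y : P) ≤ x)

section TreeTwoDim

variable {T : Type u} [PartialOrder T]

/-- In a tree, any two elements below a common element are comparable. -/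
lemma comp_of_le (hT : IsTreeOrder T) {x u w : T} (hu : u ≤ x) (hw : w ≤ x) :
    u ≤ w ∨ w ≤ u := by
  rcases hu.lt_or_eq with hu' | rfl
  · rcases hw.lt_or_eq with hw' | rfl
    · rcases eq_or_ne u w with rfl | hne
      · exact Or.inl le_rfl
      · exact hT.2 x hu' hw' hne
    · exact Or.inl hu
  · exact Or.inr hw

open Classical in
/-- The splitting node: the least `u ≤ x` with `¬ u ≤ y` (when `¬ x ≤ y`). -/
noncomputable def sp (hT : IsTreeOrder T) (x y : T) : T :=
  if h : x ≤ y then x else hT.1.min {u | u ≤ x ∧ ¬ u ≤ y} ⟨x, le_rfl, h⟩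

lemma sp_mem (hT : IsTreeOrder T) {x y : T} (h : ¬ x ≤ y) :
    sp hT x y ≤ x ∧ ¬ sp hT x y ≤ y := by
  have : sp hT x y ∈ {u | u ≤ x ∧ ¬ u ≤ y} := by
    unfold sp; rw [dif_neg h]; exact hT.1.min_mem _ _
  exact this

lemma sp_least (hT : IsTreeOrder T) {x y u : T} (h : ¬ x ≤ y) (hu : u ≤ x)
    (huy : ¬ u ≤ y) : sp hT x y ≤ u := by
  have hmem := sp_mem hT h
  have hnlt : ¬ u < sp hT x y := by
    unfold sp; rw [dif_neg h]
    exact hT.1.not_lt_min {u | u ≤ x ∧ ¬ u ≤ y} (x := u) ⟨hu, huy⟩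
  rcases comp_of_le hT hu hmem.1 with h1 | h1
  · rcases h1.lt_or_eq with h1' | h1'
    · exact absurd h1' hnlt
    · exact h1'.ge
  · exact h1

/-- Everything strictly below the splitting node is still below `y`. -/
lemma sp_lt (hT : IsTreeOrder T) {x y u : T} (h : ¬ x ≤ y) (hu : u < sp hT x y) :
    u ≤ y := by
  by_contra huy
  exact (sp_least hT h (hu.le.trans (sp_mem hT h).1) huy).not_gt hu

/-- For an incomparable pair, the two splitting nodes have the same strict
predecessors. -/
lemma sp_lt_lt (hT : IsTreeOrder T) {x y u : T} (hxy : ¬ x ≤ y) (hyx : ¬ y ≤ x)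
    (hu : u < sp hT x y) : u < sp hT y x := by
  have huy : u ≤ y := sp_lt hT hxy hu
  have hux : u ≤ x := hu.le.trans (sp_mem hT hxy).1
  rcases comp_of_le hT huy (sp_mem hT hyx).1 with h1 | h1
  · exact h1.lt_of_ne (fun he => (sp_mem hT hyx).2 (he ▸ hux))
  · exact absurd (h1.trans hux) (sp_mem hT hyx).2

/-- The two splitting nodes of an incomparable pair are incomparable. -/
lemma sp_incomp (hT : IsTreeOrder T) {x y : T} (hxy : ¬ x ≤ y) (hyx : ¬ y ≤ x) :
    ¬ sp hT x y ≤ sp hT y x ∧ ¬ sp hT y x ≤ sp hT x y :=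
  ⟨fun h => (sp_mem hT hxy).2 (h.trans (sp_mem hT hyx).1),
   fun h => (sp_mem hT hyx).2 (h.trans (sp_mem hT hxy).1)⟩

/-- If `x ≤ y` and both are incomparable with `z`, then the splitting nodes of
the pairs `(x,z)` and `(y,z)` coincide. -/
lemma sp_eq_left (hT : IsTreeOrder T) {x y z : T} (hxy : x ≤ y) (hyz : ¬ y ≤ z)
    (hzy : ¬ z ≤ y) (hxz : ¬ x ≤ z) :
    sp hT x z = sp hT y z ∧ sp hT z x = sp hT z y := by
  have hzx : ¬ z ≤ x := fun h => hzy (h.trans hxy)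
  constructor
  · have h1 : sp hT y z ≤ x := sp_least hT hyz hxy hxz
    have h2 : sp hT x z ≤ sp hT y z := sp_least hT hxz h1 (sp_mem hT hyz).2
    have h3 : sp hT y z ≤ sp hT x z :=
      sp_least hT hyz ((sp_mem hT hxz).1.trans hxy) (sp_mem hT hxz).2
    exact le_antisymm h2 h3
  · have hk : ¬ sp hT z x ≤ y := by
      intro hle
      rcases comp_of_le hT hle hxy with h1 | h1
      · exact (sp_mem hT hzx).2 h1
      · exact hxz (h1.trans (sp_mem hT hzx).1)
    have h2 : sp hT z y ≤ sp hT z x := sp_least hT hzy (sp_mem hT hzx).1 hk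
    have h3 : sp hT z x ≤ sp hT z y :=
      sp_least hT hzx (sp_mem hT hzy).1 (fun h => (sp_mem hT hzy).2 (h.trans hxy))
    exact le_antisymm h3 h2

/-- Characterization of the splitting node. -/
lemma sp_eq_of (hT : IsTreeOrder T) {x z m : T} (hxz : ¬ x ≤ z) (hm1 : m ≤ x)
    (hm2 : ¬ m ≤ z) (hmin : ∀ u, u < m → u ≤ z) : sp hT x z = m := by
  refine le_antisymm (sp_least hT hxz hm1 hm2) ?_
  rcases comp_of_le hT (sp_mem hT hxz).1 hm1 with h1 | h1
  · rcases h1.lt_or_eq with h1' | h1'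
    · exact absurd (hmin _ h1') (sp_mem hT hxz).2
    · exact h1'.ge
  · exact h1

/-- The key transitivity step for three pairwise incomparable elements. -/
lemma sp_key (hT : IsTreeOrder T) {r : T → T → Prop} (htr : Transitive r)
    (hasym : ∀ a b, r a b → ¬ r b a)
    {x y z : T} (hxy : ¬ x ≤ y) (hyx : ¬ y ≤ x) (hyz : ¬ y ≤ z) (hzy : ¬ z ≤ y)
    (hxz : ¬ x ≤ z) (hzx : ¬ z ≤ x)
    (h1 : r (sp hT x y) (sp hT y x)) (h2 : r (sp hT y z) (sp hT z y)) :
    r (sp hT x z) (sp hT z x) := by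
  have ha := sp_mem hT hxy
  have hb := sp_mem hT hyx
  have hc := sp_mem hT hyz
  have hd := sp_mem hT hzy
  rcases eq_or_ne (sp hT y x) (sp hT y z) with hbc | hbc
  · -- b = c : x and z split off y at the same node
    rcases eq_or_ne (sp hT x y) (sp hT z y) with had | had
    · -- a = d : contradiction with h1, h2
      exact absurd (had ▸ hbc ▸ h2) (hasym _ _ h1)
    · have haz : ¬ sp hT x y ≤ z := by
        intro h
        have hda : sp hT z y ≤ sp hT x y := sp_least hT hzy h ha.2
        have had' : sp hT x y ≤ sp hT z y :=
          sp_least hT hxy (hda.trans ha.1) hd.2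
        exact had (le_antisymm had' hda)
      have hdx : ¬ sp hT z y ≤ x := by
        intro h
        have had' : sp hT x y ≤ sp hT z y := sp_least hT hxy h hd.2
        have hda : sp hT z y ≤ sp hT x y :=
          sp_least hT hzy (had'.trans hd.1) ha.2
        exact had (le_antisymm had' hda)
      have he : sp hT x z = sp hT x y := by
        refine sp_eq_of hT hxz ha.1 haz (fun u hu => sp_lt hT hyz ?_)
        have := sp_lt_lt hT hxy hyx hu
        rwa [hbc] at this
      have hf : sp hT z x = sp hT z y := by
        refine sp_eq_of hT hzx hd.1 hdx (fun u hu => sp_lt hT hyx ?_)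
        have := sp_lt_lt hT hzy hyz hu
        rwa [← hbc] at this
      rw [he, hf]
      refine htr h1 ?_
      rw [hbc]
      exact h2
  · rcases comp_of_le hT hb.1 hc.1 with hle | hle
    · -- b < c
      have hlt : sp hT y x < sp hT y z := hle.lt_of_ne hbc
      have hbz : sp hT y x ≤ z := sp_lt hT hyz hlt
      have he : sp hT x z = sp hT x y := by
        refine sp_eq_of hT hxz ha.1 ?_ ?_
        · intro h
          rcases comp_of_le hT h hbz with h' | h'
          · exact (sp_incomp hT hxy hyx).1 h'
          · exact (sp_incomp hT hxy hyx).2 h'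
        · intro u hu
          exact sp_lt hT hyz ((sp_lt_lt hT hxy hyx hu).trans hlt)
      have hf : sp hT z x = sp hT y x :=
        sp_eq_of hT hzx hbz hb.2 (fun u hu => sp_lt hT hyx hu)
      rw [he, hf]; exact h1
    · -- c < b
      have hlt : sp hT y z < sp hT y x := hle.lt_of_ne (Ne.symm hbc)
      have hcx : sp hT y z ≤ x := sp_lt hT hyx hlt
      have he : sp hT x z = sp hT y z :=
        sp_eq_of hT hxz hcx hc.2 (fun u hu => sp_lt hT hyz hu)
      have hf : sp hT z x = sp hT z y := by
        refine sp_eq_of hT hzx hd.1 ?_ ?_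
        · intro h
          rcases comp_of_le hT h hcx with h' | h'
          · exact (sp_incomp hT hzy hyz).1 h'
          · exact (sp_incomp hT hzy hyz).2 h'
        · intro u hu
          exact sp_lt hT hyx ((sp_lt_lt hT hzy hyz hu).trans hlt)
      rw [he, hf]; exact h2

/-- The order obtained by resolving incomparable pairs via `r` on splitting
nodes is a linear order. -/
lemma tree_le_linear (hT : IsTreeOrder T) {r : T → T → Prop} (htr : Transitive r)
    (hirr : ∀ a, ¬ r a a) (htri : ∀ a b, r a b ∨ a = b ∨ r b a) :
    IsLinearOrder T
      (fun x y => x ≤ y ∨ (¬ x ≤ y ∧ ¬ y ≤ x ∧ r (sp hT x y) (sp hT y x))) := by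
  have hasym : ∀ a b, r a b → ¬ r b a := fun a b hab hba => hirr a (htr hab hba)
  set le := fun x y : T =>
    x ≤ y ∨ (¬ x ≤ y ∧ ¬ y ≤ x ∧ r (sp hT x y) (sp hT y x)) with hle
  haveI : IsRefl T le := ⟨fun a => Or.inl le_rfl⟩
  haveI : IsTrans T le := by
    constructor
    intro a b c hab hbc
    rcases hab with hab | ⟨hab, hba, hr1⟩
    · rcases hbc with hbc | ⟨hbc, hcb, hr2⟩
      · exact Or.inl (hab.trans hbc)
      · by_cases hac : a ≤ c
        · exact Or.inl hac
        · have hca : ¬ c ≤ a := fun h => hcb (h.trans hab)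
          obtain ⟨he, hf⟩ := sp_eq_left hT hab hbc hcb hac
          exact Or.inr ⟨hac, hca, he ▸ hf ▸ hr2⟩
    · rcases hbc with hbc | ⟨hbc, hcb, hr2⟩
      · by_cases hac : a ≤ c
        · exact Or.inl hac
        · have hca : ¬ c ≤ a := fun h => hba (hbc.trans h)
          obtain ⟨he, hf⟩ := sp_eq_left hT hbc hca hac hba
          exact Or.inr ⟨hac, hca, hf ▸ he ▸ hr1⟩
      · by_cases hac : a ≤ c
        · exact Or.inl hac
        · by_cases hca : c ≤ a
          · obtain ⟨he, hf⟩ := sp_eq_left hT hca hab hba hcb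
            exact absurd (he ▸ hf ▸ hr2) (hasym _ _ hr1)
          · exact Or.inr ⟨hac, hca,
              sp_key hT htr hasym hab hba hbc hcb hac hca hr1 hr2⟩
  haveI : IsAntisymm T le := by
    constructor
    intro a b hab hba
    rcases hab with hab | ⟨hab, hba', hr1⟩
    · rcases hba with hba | ⟨hba, hab', hr2⟩
      · exact le_antisymm hab hba
      · exact absurd hab hab'
    · rcases hba with hba | ⟨hba, hab', hr2⟩
      · exact absurd hba hba'
      · exact absurd hr2 (hasym _ _ hr1)
  haveI : IsTotal T le := by
    constructor
    intro a b
    by_cases hab : a ≤ b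
    · exact Or.inl (Or.inl hab)
    · by_cases hba : b ≤ a
      · exact Or.inr (Or.inl hba)
      · rcases htri (sp hT a b) (sp hT b a) with h | h | h
        · exact Or.inl (Or.inr ⟨hab, hba, h⟩)
        · exact absurd (h ▸ (sp_mem hT hba).1) (sp_mem hT hab).2
        · exact Or.inr (Or.inr ⟨hba, hab, h⟩)
  haveI : IsPreorder T le := {}
  haveI : IsPartialOrder T le := {}
  exact {}

/-- Every tree order is two-dimensional. -/
lemma tree_twoDim (hT : IsTreeOrder T) : TwoDim T := by
  classical
  set r : T → T → Prop := WellOrderingRel with hr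
  have hwo : IsWellOrder T r := WellOrderingRel.isWellOrder
  have htr : Transitive r := fun a b c => by haveI := hwo; exact _root_.trans
  have hirr : ∀ a, ¬ r a a := fun a ha =>
    (hwo.toIsWellFounded.wf.isIrrefl).irrefl a ha
  have htri : ∀ a b, r a b ∨ a = b ∨ r b a := fun a b => by haveI := hwo; exact trichotomous a b
  refine ⟨fun x y => x ≤ y ∨ (¬ x ≤ y ∧ ¬ y ≤ x ∧ r (sp hT x y) (sp hT y x)),
    fun x y => x ≤ y ∨ (¬ x ≤ y ∧ ¬ y ≤ x ∧ r (sp hT y x) (sp hT x y)),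
    tree_le_linear hT htr hirr htri, ?_, ?_⟩
  · have := tree_le_linear hT (r := fun a b => r b a)
      (fun a b c hab hbc => htr hbc hab) hirr
      (fun a b => (htri b a).imp id (fun h => h.imp Eq.symm id))
    exact this
  · intro x y
    constructor
    · exact fun h => ⟨Or.inl h, Or.inl h⟩
    · rintro ⟨h1 | ⟨h1, _, hr1⟩, h2 | ⟨h2, _, hr2⟩⟩
      · exact h1
      · exact h1
      · exact h2
      · exact absurd hr2 (fun h => hirr _ (htr hr1 h))

end TreeTwoDim

/-- If antichain-cover reflection at `ℵ₁` holds for all 2-dimensional posets, then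
it holds for all trees. -/
theorem twoDim_antichain_reflection_implies_tree_reflection
    (h2 : ∀ (P : Type u) [PartialOrder P], TwoDim P →
      (∀ Q : Set P, #Q = aleph 1 → CtblAntichainCover Q) →
        CtblAntichainCover (Set.univ : Set P)) :
    ∀ (T : Type u) [PartialOrder T], IsTreeOrder T →
      (∀ Q : Set T, #Q = aleph 1 → CtblAntichainCover Q) →
        CtblAntichainCover (Set.univ : Set T) := by
  intro T _ hT hQ
  exact h2 T (tree_twoDim hT) hQ
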